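/- Let k be a finite field with q elements and r ∈ k^× a nonzero element. For every integer l ≥ 0, the cardinalities of the sets of length-l words satisfy |A_r^{l+1}| + |A_r^l| = q^l, and |A_r^0| = 0. -/

import Mathlib

/-- The monoid homomorphism π sending a word α₁…α_l over k to the matrix product
[[0,1],[−1,α₁]] ⋯ [[0,1],[−1,α_l]]. -/
def piWord {k : Type*} [Field k] (w : List k) : Matrix (Fin 2) (Fin 2) k :=
  (w.map fun α => !![0, 1; -1, α]).prod

/-- A_r : words w with π(w) = [[a,b],[c,d]] satisfying d = b·r and b ≠ 0. -/
def Ar {k : Type*} [Field k] (r : k) : Set (List k) :=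
  {w | piWord w 1 1 = piWord w 0 1 * r ∧ piWord w 0 1 ≠ 0}

/-- Number of words of length l lying in A_r. -/
noncomputable def cardArl {k : Type*} [Field k] (r : k) (l : ℕ) : ℕ :=
  Nat.card {w : List k // w.length = l ∧ w ∈ Ar r}

section aux
variable {k : Type*} [Field k]

lemma piWord_concat (w : List k) (α : k) :
    piWord (w ++ [α]) = piWord w * !![0, 1; -1, α] := by
  simp [piWord]

lemma det_piWord (w : List k) :
    piWord w 0 0 * piWord w 1 1 - piWord w 0 1 * piWord w 1 0 = 1 := by
  have h : (piWord w).det = 1 := by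
    induction w with
    | nil => simp [piWord]
    | cons a t ih =>
      rw [piWord, List.map_cons, List.prod_cons, Matrix.det_mul]
      simp only [piWord] at ih
      simp [Matrix.det_fin_two_of, ih]
  rw [Matrix.det_fin_two] at h
  exact h

lemma mem_Ar_concat (r : k) (w : List k) (α : k) :
    (w ++ [α]) ∈ Ar r ↔
      (piWord w 1 0 + piWord w 1 1 * α = (piWord w 0 0 + piWord w 0 1 * α) * r ∧
       piWord w 0 0 + piWord w 0 1 * α ≠ 0) := by
  have h1 : piWord (w ++ [α]) 1 1 = piWord w 1 0 + piWord w 1 1 * α := by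
    rw [piWord_concat]; simp [Matrix.mul_apply, Fin.sum_univ_two]
  have h0 : piWord (w ++ [α]) 0 1 = piWord w 0 0 + piWord w 0 1 * α := by
    rw [piWord_concat]; simp [Matrix.mul_apply, Fin.sum_univ_two]
  constructor
  · rintro ⟨ha, hb⟩; rw [h1, h0] at ha; rw [h0] at hb; exact ⟨ha, hb⟩
  · rintro ⟨ha, hb⟩; exact ⟨by rw [h1, h0]; exact ha, by rw [h0]; exact hb⟩

/-- No extension of a word in A_r stays in A_r (scalar form). -/
lemma no_ext {a b c d r α : k} (hdet : a * d - b * c = 1) (hd : d = b * r)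
    (heq : c + d * α = (a + b * α) * r) : False := by
  have : (1 : k) = 0 := by
    linear_combination -hdet + a * hd + b * α * hd - b * heq
  exact one_ne_zero this

lemma d_ne {a b c d r : k} (hdet : a * d - b * c = 1)
    (hw : ¬(d = b * r ∧ b ≠ 0)) : d - b * r ≠ 0 := by
  intro h
  have hd : d = b * r := sub_eq_zero.mp h
  have hb : b = 0 := by
    by_contra hb; exact hw ⟨hd, hb⟩
  rw [hb, hd, hb] at hdet
  simp at hdet

/-- The canonical extension scalar. -/
noncomputable def extAlpha (r : k) (w : List k) : k :=
  (piWord w 0 0 * r - piWord w 1 0) / (piWord w 1 1 - piWord w 0 1 * r)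

lemma ext_eq {a b c d r : k} (hdet : a * d - b * c = 1) (hne : d - b * r ≠ 0) :
    c + d * ((a * r - c) / (d - b * r)) = (a + b * ((a * r - c) / (d - b * r))) * r := by
  have h : (a * r - c) / (d - b * r) * (d - b * r) = a * r - c := div_mul_cancel₀ _ hne
  linear_combination h

lemma ext_nonzero {a b c d r α : k} (hdet : a * d - b * c = 1)
    (heq : c + d * α = (a + b * α) * r) (hr : r ≠ 0) : a + b * α ≠ 0 := by
  intro h0
  have hc : c + d * α = 0 := by rw [heq, h0, zero_mul]
  have : (1 : k) = 0 := by linear_combination d * h0 - b * hc - hdet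
  exact one_ne_zero this

lemma ext_unique {a b c d r α α' : k} (hdet : a * d - b * c = 1) (hr : r ≠ 0)
    (h1 : c + d * α = (a + b * α) * r) (hb1 : a + b * α ≠ 0)
    (h2 : c + d * α' = (a + b * α') * r) : α = α' := by
  have hne : d - b * r ≠ 0 := by
    apply d_ne hdet
    rintro ⟨hd, hb⟩
    exact no_ext hdet hd h1
  have : (α - α') * (d - b * r) = 0 := by linear_combination h1 - h2
  rcases mul_eq_zero.mp this with h | h
  · exact sub_eq_zero.mp h
  · exact absurd h hne

variable (r : k)

/-- extension of a word not in A_r lands in A_r -/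
lemma ext_mem_Ar (hr : r ≠ 0) (w : List k) (hw : w ∉ Ar r) : (w ++ [extAlpha r w]) ∈ Ar r := by
  set a := piWord w 0 0; set b := piWord w 0 1; set c := piWord w 1 0; set d := piWord w 1 1
  have hdet : a * d - b * c = 1 := det_piWord w
  have hne : d - b * r ≠ 0 := d_ne hdet hw
  rw [mem_Ar_concat]
  have heq := ext_eq hdet hne
  have : extAlpha r w = (a * r - c) / (d - b * r) := rfl
  rw [this]
  exact ⟨heq, ext_nonzero hdet heq hr⟩

/-- a word in A_r of positive length has dropLast not in A_r -/
lemma dropLast_not_mem (w : List k) (hne : w ≠ []) (hw : w ∈ Ar r) :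
    w.dropLast ∉ Ar r := by
  intro hmem
  have hconcat : w.dropLast ++ [w.getLast hne] = w := List.dropLast_append_getLast hne
  rw [← hconcat, mem_Ar_concat] at hw
  exact no_ext (det_piWord w.dropLast) hmem.1 hw.1

lemma extAlpha_getLast (hr : r ≠ 0) (w : List k) (hne : w ≠ []) (hw : w ∈ Ar r) :
    extAlpha r w.dropLast = w.getLast hne := by
  have hconcat : w.dropLast ++ [w.getLast hne] = w := List.dropLast_append_getLast hne
  have hw' : (w.dropLast ++ [w.getLast hne]) ∈ Ar r := by rw [hconcat]; exact hw
  rw [mem_Ar_concat] at hw'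
  have hw2 := ext_mem_Ar r hr w.dropLast (dropLast_not_mem r w hne hw)
  rw [mem_Ar_concat] at hw2
  exact ext_unique (det_piWord w.dropLast) hr hw2.1 hw2.2 hw'.1

/-- the key equivalence -/
noncomputable def keyEquiv (hr : r ≠ 0) (l : ℕ) :
    {w : List k // w.length = l + 1 ∧ w ∈ Ar r} ≃ {w : List k // w.length = l ∧ w ∉ Ar r} where
  toFun w := ⟨w.1.dropLast, by
    rcases w with ⟨w, hl, hw⟩
    have hne : w ≠ [] := by intro h; simp [h] at hl
    exact ⟨by simp [List.length_dropLast, hl], dropLast_not_mem r w hne hw⟩⟩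
  invFun w := ⟨w.1 ++ [extAlpha r w.1], by
    rcases w with ⟨w, hl, hw⟩
    exact ⟨by simp [hl], ext_mem_Ar r hr w hw⟩⟩
  left_inv := by
    rintro ⟨w, hl, hw⟩
    have hne : w ≠ [] := by intro h; simp [h] at hl
    have h2 := extAlpha_getLast r hr w hne hw
    apply Subtype.ext
    show w.dropLast ++ [extAlpha r w.dropLast] = w
    rw [h2]
    exact List.dropLast_append_getLast hne
  right_inv := by
    rintro ⟨w, hl, hw⟩
    apply Subtype.ext
    show (w ++ [extAlpha r w]).dropLast = w
    simp

end aux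

theorem stmt4 {k : Type*} [Field k] [Fintype k] (r : k) (hr : r ≠ 0) :
    (∀ l : ℕ, cardArl r (l + 1) + cardArl r l = (Fintype.card k) ^ l) ∧
    cardArl r 0 = 0 := by
  classical
  constructor
  · intro l
    have h1 : cardArl r (l + 1) = Nat.card {w : List k // w.length = l ∧ w ∉ Ar r} :=
      Nat.card_congr (keyEquiv r hr l)
    have e2 : {w : List k // w.length = l ∧ w ∉ Ar r} ≃
        {v : List.Vector k l // v.1 ∉ Ar r} :=
      (Equiv.subtypeSubtypeEquivSubtypeInter (fun w : List k => w.length = l)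
        (fun w => w ∉ Ar r)).symm
    have e3 : {w : List k // w.length = l ∧ w ∈ Ar r} ≃
        {v : List.Vector k l // v.1 ∈ Ar r} :=
      (Equiv.subtypeSubtypeEquivSubtypeInter (fun w : List k => w.length = l)
        (fun w => w ∈ Ar r)).symm
    rw [h1, cardArl, Nat.card_congr e2, Nat.card_congr e3,
      Nat.card_eq_fintype_card, Nat.card_eq_fintype_card]
    rw [Fintype.card_subtype_compl]
    have hle : Fintype.card {v : List.Vector k l // v.1 ∈ Ar r} ≤
        Fintype.card (List.Vector k l) := Fintype.card_subtype_le _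
    rw [← card_vector l]
    omega
  · unfold cardArl
    have : IsEmpty {w : List k // w.length = 0 ∧ w ∈ Ar r} := by
      constructor
      rintro ⟨w, hl, hw⟩
      have : w = [] := List.length_eq_zero_iff.mp hl
      subst this
      exact hw.2 (by simp [piWord, Matrix.one_apply])
    exact Nat.card_of_isEmpty
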